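/- arXiv:1905.01606 — 3 statements merged into one kernel-verified Lean document; each statement's English description precedes it below -/
import Mathlib

section
/- Let (F, τ) be an LGT-space. If every element of F is closed (i.e., τ* = F), then τ is the discrete LG-topology, i.e., τ = F. -/
def IsLGTop {F : Type*} [Order.Frame F] (τ : Set F) : Prop :=
  ⊤ ∈ τ ∧ (∀ s ∈ τ, ∀ t ∈ τ, s ⊓ t ∈ τ) ∧ (∀ S ⊆ τ, sSup S ∈ τ)

/-- pseudocomplement -/
def pc {F : Type*} [Order.Frame F] (a : F) : F := sSup {x | x ⊓ a = ⊥}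

lemma pc_eq_compl {F : Type*} [Order.Frame F] (a : F) : pc a = aᶜ := by
  apply le_antisymm
  · apply sSup_le
    intro x hx
    exact le_compl_iff_disjoint_right.mpr (disjoint_iff.mpr hx)
  · exact le_sSup (by simp [Set.mem_setOf_eq, Set.mem_setOf_eq, inf_comm, ← disjoint_iff, disjoint_compl_right])

theorem stmt_6 {F : Type*} [Order.Frame F] (τ : Set F) (hτ : IsLGTop τ)
    (h : pc '' τ = Set.univ) : τ = Set.univ := by
  -- every element of F is "regular": x = pc (pc x)
  have hreg : ∀ x : F, pc (pc x) = x := by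
    intro x
    have hx : x ∈ pc '' τ := by rw [h]; trivial
    obtain ⟨t, _, ht⟩ := hx
    rw [← ht]
    simp [pc_eq_compl, compl_compl_compl]
  ext a
  simp only [Set.mem_univ, iff_true]
  have hpa : pc a ∈ pc '' τ := by rw [h]; trivial
  obtain ⟨s, hs, hsa⟩ := hpa
  have : s = a := by
    have := hreg s
    have := hreg a
    calc s = pc (pc s) := (hreg s).symm
    _ = pc (pc a) := by rw [hsa]
    _ = a := hreg a
  rwa [this] at hs
end

section
/- Let φ : F → F' be a join-preserving map between LGT-spaces (F,τ) and (F',τ'), let s, t ∈ τ with s ∨ t = 1, and suppose both restrictions φ|_{F_s} and φ|_{F_t} are OLG maps. Then φ is an OLG map. -/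
theorem stmt_14 {F F' : Type*} [Order.Frame F] [Order.Frame F']
    (τ : Set F) (τ' : Set F') (hτ : IsLGTop τ) (hτ' : IsLGTop τ')
    (φ : F → F') (hφ : ∀ S : Set F, φ (sSup S) = sSup (φ '' S))
    (s t : F) (hs : s ∈ τ) (ht : t ∈ τ) (hst : s ⊔ t = ⊤)
    (hOLGs : ∀ b ∈ τ', sSup {x : F | x ≤ s ∧ φ x ≤ b} ∈ (fun u => u ⊓ s) '' τ)
    (hOLGt : ∀ b ∈ τ', sSup {x : F | x ≤ t ∧ φ x ≤ b} ∈ (fun u => u ⊓ t) '' τ) :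
    ∀ b ∈ τ', sSup {x : F | φ x ≤ b} ∈ τ := by
  intro b hb
  have mono : Monotone φ := by
    intro x y hxy
    have h := hφ {x, y}
    rw [Set.image_pair, sSup_pair, sSup_pair, sup_eq_right.mpr hxy] at h
    rw [h]
    exact le_sup_left
  set As := sSup {x : F | x ≤ s ∧ φ x ≤ b} with hAs
  set At := sSup {x : F | x ≤ t ∧ φ x ≤ b} with hAt
  have hφAs : φ As ≤ b := by
    rw [hAs, hφ]
    exact sSup_le (by rintro _ ⟨x, ⟨_, hx⟩, rfl⟩; exact hx)
  have hφAt : φ At ≤ b := by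
    rw [hAt, hφ]
    exact sSup_le (by rintro _ ⟨x, ⟨_, hx⟩, rfl⟩; exact hx)
  have key : sSup {x : F | φ x ≤ b} = As ⊔ At := by
    apply le_antisymm
    · apply sSup_le
      intro x hx
      have hxeq : x = x ⊓ s ⊔ x ⊓ t := by rw [← inf_sup_left, hst, inf_top_eq]
      rw [hxeq]
      exact sup_le_sup
        (le_sSup ⟨inf_le_right, le_trans (mono inf_le_left) hx⟩)
        (le_sSup ⟨inf_le_right, le_trans (mono inf_le_left) hx⟩)
    · exact sup_le (le_sSup hφAs) (le_sSup hφAt)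
  obtain ⟨u, hu, hus⟩ := hOLGs b hb
  obtain ⟨v, hv, hvt⟩ := hOLGt b hb
  have hus' : u ⊓ s = As := hus
  have hvt' : v ⊓ t = At := hvt
  rw [key, ← hus', ← hvt', ← sSup_pair]
  apply hτ.2.2
  intro z hz
  rcases hz with rfl | rfl
  · exact hτ.2.1 u hu s hs
  · exact hτ.2.1 v hv t ht
end

section
/- Let (F',τ') be an LGT-space, F a frame, and φ : F' → F an onto map such that both φ and its right adjoint φ_* preserve arbitrary joins. Then τ_φ = {t ∈ F : φ_*(t) ∈ τ'} is an LG-topology (subframe) on F, and it is the largest LG-topology on F making φ an OLG map. -/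
def rAdj {F₁ F₂ : Type*} [Order.Frame F₁] [Order.Frame F₂] (φ : F₁ → F₂) (b : F₂) : F₁ :=
  sSup {x | φ x ≤ b}

theorem stmt_16 {F' F : Type*} [Order.Frame F'] [Order.Frame F]
    (τ' : Set F') (hτ' : IsLGTop τ')
    (φ : F' → F) (hsurj : Function.Surjective φ)
    (hφ : ∀ S : Set F', φ (sSup S) = sSup (φ '' S))
    (hψ : ∀ S : Set F, rAdj φ (sSup S) = sSup (rAdj φ '' S)) :
    IsLGTop {t : F | rAdj φ t ∈ τ'} ∧
      ∀ σ : Set F, IsLGTop σ → (∀ t ∈ σ, rAdj φ t ∈ τ') →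
        σ ⊆ {t : F | rAdj φ t ∈ τ'} := by
  have mono : Monotone φ := by
    intro a b hab
    have h1 : sSup ({a, b} : Set F') = b := by
      rw [sSup_pair, sup_eq_right.mpr hab]
    have h2 := hφ {a, b}
    rw [h1] at h2
    rw [h2]
    exact le_sSup ⟨a, by simp, rfl⟩
  have gc : GaloisConnection φ (rAdj φ) := by
    intro x b
    constructor
    · intro h; exact le_sSup h
    · intro h
      calc φ x ≤ φ (rAdj φ b) := mono h
        _ ≤ b := by
          rw [rAdj, hφ]
          apply sSup_le
          rintro _ ⟨y, hy, rfl⟩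
          exact hy
  obtain ⟨ht, hm, hs⟩ := hτ'
  refine ⟨⟨?_, ?_, ?_⟩, ?_⟩
  · show rAdj φ ⊤ ∈ τ'
    rw [gc.u_top]; exact ht
  · intro s hsτ t htτ
    show rAdj φ (s ⊓ t) ∈ τ'
    rw [gc.u_inf]
    exact hm _ hsτ _ htτ
  · intro S hS
    show rAdj φ (sSup S) ∈ τ'
    rw [hψ]
    apply hs
    rintro _ ⟨t, htS, rfl⟩
    exact hS htS
  · intro σ _ h t htσ
    exact h t htσ
end
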